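/- In an algebra with distinguished elements a, b, c satisfying a⊗b = A·c + B·t^δ·c' and b⊗a = A^{-1}·c + B^{-1}·t^{-δ}·c' (with A = B = t^{-χ/2}, χ = ±1, δ ∈ {0,1}, (δ,χ) ∈ {(1,1),(0,-1)}), together with a⊗c = C·d + D·t^{δ-1}·d', c⊗a = C^{-1}·d + D^{-1}·t^{1-δ}·d', a⊗c' = E·t·d', c'⊗a = E^{-1}·t^{-1}·d' where C = D = E = t^{-χ/2} and c, c', d, d' are linearly independent, the quantum Serre relation holds: a^{⊗2}⊗b − (t + t^{-1})·a⊗b⊗a + b⊗a^{⊗2} = 0. -/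

import Mathlib

/-- Abstract quantum Serre relation.  In an algebra over a field `F`
with `t = u²` (`u` a unit, so that `t^{±1/2} = u^{±1}` makes sense), given elements
`a, b, c, c', d, d'` with `c, c', d, d'` linearly independent, parameters `χ = ±1`,
`δ ∈ {0,1}` with `(δ,χ) ∈ {(1,1),(0,−1)}`, and product expansions
`a⊗b = A·c + B·t^δ·c'`, `b⊗a = A⁻¹·c + B⁻¹·t^{−δ}·c'`,
`a⊗c = C·d + D·t^{δ−1}·d'`, `c⊗a = C⁻¹·d + D⁻¹·t^{1−δ}·d'`,
`a⊗c' = E·t·d'`, `c'⊗a = E⁻¹·t⁻¹·d'` with `A = B = C = D = E = t^{−χ/2} = u^{−χ}`,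
the quantum Serre relation holds:
`a²⊗b − (t + t⁻¹)·a⊗b⊗a + b⊗a² = 0`. -/
theorem abstract_quantum_serre {F A : Type*} [Field F] [Ring A] [Algebra F A]
    (u : Fˣ) (χ δ : ℤ)
    (hcase : (δ = 1 ∧ χ = 1) ∨ (δ = 0 ∧ χ = -1))
    (a b c c' d d' : A)
    (hind : LinearIndependent F ![c, c', d, d'])
    (h1 : a * b = ((u ^ (-χ) : Fˣ) : F) • c + ((u ^ (-χ + 2 * δ) : Fˣ) : F) • c')
    (h2 : b * a = ((u ^ χ : Fˣ) : F) • c + ((u ^ (χ - 2 * δ) : Fˣ) : F) • c')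
    (h3 : a * c = ((u ^ (-χ) : Fˣ) : F) • d + ((u ^ (-χ + 2 * δ - 2) : Fˣ) : F) • d')
    (h4 : c * a = ((u ^ χ : Fˣ) : F) • d + ((u ^ (χ - 2 * δ + 2) : Fˣ) : F) • d')
    (h5 : a * c' = ((u ^ (-χ + 2) : Fˣ) : F) • d')
    (h6 : c' * a = ((u ^ (χ - 2) : Fˣ) : F) • d') :
    a * a * b - (((u ^ (2 : ℤ) : Fˣ) : F) + ((u ^ (-2 : ℤ) : Fˣ) : F)) • (a * b * a)
      + b * (a * a) = 0 := by
  have hv : (u : F) ≠ 0 := u.ne_zero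
  have e1 : a * a * b = a * (a * b) := mul_assoc a a b
  have e2 : b * (a * a) = b * a * a := (mul_assoc b a a).symm
  rw [e1, e2, h1, h2, mul_add, add_mul, add_mul, mul_smul_comm, mul_smul_comm,
    smul_mul_assoc, smul_mul_assoc, smul_mul_assoc, smul_mul_assoc,
    h3, h4, h5, h6]
  simp only [Units.val_zpow_eq_zpow_val]
  obtain ⟨hδ, hχ⟩ | ⟨hδ, hχ⟩ := hcase <;> subst hδ <;> subst hχ <;>
    match_scalars <;>
    norm_num <;>
    simp (config := {failIfUnchanged := false}) only [show ((2:ℤ)) = ((2:ℕ):ℤ) from rfl, show ((3:ℤ)) = ((3:ℕ):ℤ) from rfl,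
      zpow_natCast] <;> field_simp <;> ring
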